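/- Let $A$ be a (not necessarily commutative) ring, let $m \geq 2$, and let $h_{st} \in A$ for $1 \leq s < t \leq m$ be elements satisfying $h_{rs} h_{s,s+1} = h_{r,s+1}$ for all $1 \leq r < s < m$ (and for $r \leq 2$ in particular). Then $\sum_{(k_1,\dots,k_r) \in I_{1m}} (-1)^r (1 - h_{k_{r-1} k_r}) = \sum_{(k_1,\dots,k_r) \in I_{1m}} (-1)^r (1 - h_{k_1, k_1+1})(1 - h_{k_2, k_2+1}) \cdots (1 - h_{k_{r-1}, k_{r-1}+1})$, where $I_{1m}$ is the set of chains $1 = k_1 < k_2 < \cdots < k_r = m$ with $r \geq 2$. -/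

import Mathlib

lemma sort_insert_max {n : ℕ} {S : Finset ℕ} (hle : ∀ b ∈ S, b ≤ n) (hn : n ∉ S) :
    (insert n S).sort (· ≤ ·) = S.sort (· ≤ ·) ++ [n] := by
  have hsorted : List.Pairwise (· ≤ ·) (S.sort (· ≤ ·) ++ [n]) := by
    rw [List.pairwise_append]
    refine ⟨Finset.pairwise_sort _ _, List.pairwise_singleton _ _, ?_⟩
    intro x hx y hy
    simp only [List.mem_singleton] at hy; subst hy
    exact hle x ((Finset.mem_sort (α := ℕ) (· ≤ ·)).1 hx)
  refine List.Perm.eq_of_pairwise' (Finset.pairwise_sort _ _) hsorted ?_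
  exact ((Finset.sort_perm_toList _ _).trans (Finset.toList_insert hn)).trans
      (((Finset.sort_perm_toList S (· ≤ ·)).symm.cons n).trans
        (List.perm_append_singleton n _).symm)

lemma getLast_congr' {α : Type*} {l₁ l₂ : List α} (h : l₁ = l₂) (h₁ : l₁ ≠ []) :
    l₁.getLast h₁ = l₂.getLast (h ▸ h₁) := by subst h; rfl

lemma getLast_cons_append_singleton (a n : ℕ) (L : List ℕ) :
    (a :: (L ++ [n])).getLast (by simp) = n := by
  rw [getLast_congr' (show a :: (L ++ [n]) = (a :: L) ++ [n] by simp)]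
  exact List.getLast_append _


/-- A chain `(k_1, …, k_r) ∈ I_{1m}` (that is, `r ≥ 2` and `1 = k_1 < ⋯ < k_r = m`)
is encoded by the finite set `S ⊆ (1, m)` of its interior entries; its length is
`r = S.card + 2`, the entries `k_1, …, k_{r-1}` form the list `1 :: S.sort (· ≤ ·)`,
and the penultimate entry `k_{r-1}` is the last element of that list. -/
def chainList (i j : ℕ) (S : Finset ℕ) : List ℕ := i :: (S.sort (· ≤ ·) ++ [j])

/-- Let `A` be a ring, `m ≥ 2`, and `h_{st} ∈ A` (`1 ≤ s < t ≤ m`)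
with `h_{rs} h_{s,s+1} = h_{r,s+1}` for all `1 ≤ r < s < m`.  Then
`∑_{(k_1,…,k_r) ∈ I_{1m}} (-1)^r (1 - h_{k_{r-1} k_r})
  = ∑_{(k_1,…,k_r) ∈ I_{1m}} (-1)^r (1 - h_{k_1,k_1+1}) ⋯ (1 - h_{k_{r-1},k_{r-1}+1})`. -/
theorem stmt_2 {A : Type*} [Ring A] (m : ℕ) (hm : 2 ≤ m) (h : ℕ → ℕ → A)
    (hyp : ∀ r s, 1 ≤ r → r < s → s < m → h r s * h s (s + 1) = h r (s + 1)) :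
    ∑ S ∈ (Finset.Ioo 1 m).powerset,
        (-1 : ℤ) ^ (S.card + 2) • (1 - h ((1 :: S.sort (· ≤ ·)).getLast (by simp)) m)
      =
    ∑ S ∈ (Finset.Ioo 1 m).powerset,
        (-1 : ℤ) ^ (S.card + 2) •
          ((1 :: S.sort (· ≤ ·)).map fun t => 1 - h t (t + 1)).prod := by
  induction m, hm using Nat.le_induction generalizing h with
  | base =>
    have : Finset.Ioo 1 2 = (∅ : Finset ℕ) := rfl
    rw [this]
    simp
  | succ n hn IH =>
    have hyp' : ∀ r s, 1 ≤ r → r < s → s < n → h r s * h s (s + 1) = h r (s + 1) :=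
      fun r s h1 h2 h3 => hyp r s h1 h2 (h3.trans (Nat.lt_succ_self n))
    have hio : Finset.Ioo 1 (n + 1) = insert n (Finset.Ioo 1 n) := by
      ext x; simp only [Finset.mem_Ioo, Finset.mem_insert]; omega
    have hnmem : n ∉ Finset.Ioo 1 n := by simp
    rw [hio, Finset.sum_powerset_insert hnmem, Finset.sum_powerset_insert hnmem,
      ← Finset.sum_add_distrib, ← Finset.sum_add_distrib]
    calc
      ∑ S ∈ (Finset.Ioo 1 n).powerset,
          ((-1 : ℤ) ^ (S.card + 2) •
              (1 - h ((1 :: S.sort (· ≤ ·)).getLast (by simp)) (n + 1))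
            + (-1 : ℤ) ^ ((insert n S).card + 2) •
              (1 - h ((1 :: (insert n S).sort (· ≤ ·)).getLast (by simp)) (n + 1)))
        = ∑ S ∈ (Finset.Ioo 1 n).powerset,
          ((-1 : ℤ) ^ (S.card + 2) •
              (1 - h ((1 :: S.sort (· ≤ ·)).getLast (by simp)) n)) * h n (n + 1) := by
          refine Finset.sum_congr rfl fun S hS => ?_
          rw [Finset.mem_powerset] at hS
          have hSle : ∀ b ∈ S, b ≤ n := fun b hb => le_of_lt (Finset.mem_Ioo.1 (hS hb)).2
          have hSn : n ∉ S := fun hc => hnmem (hS hc)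
          have hsort : (insert n S).sort (· ≤ ·) = S.sort (· ≤ ·) ++ [n] :=
            sort_insert_max hSle hSn
          have hcard : (insert n S).card = S.card + 1 := Finset.card_insert_of_notMem hSn
          have hlast2 : (1 :: (insert n S).sort (· ≤ ·)).getLast (by simp) = n := by
            rw [getLast_congr' (show (1 : ℕ) :: (insert n S).sort (· ≤ ·)
              = 1 :: (S.sort (· ≤ ·) ++ [n]) by rw [hsort])]
            exact getLast_cons_append_singleton _ _ _
          set l := (1 :: S.sort (· ≤ ·)).getLast (by simp) with hl
          have hlmem : l ∈ 1 :: S.sort (· ≤ ·) := List.getLast_mem _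
          have hl1 : 1 ≤ l ∧ l < n := by
            rcases List.mem_cons.1 hlmem with h' | h'
            · omega
            · have := Finset.mem_Ioo.1 (hS ((Finset.mem_sort (α := ℕ) (· ≤ ·)).1 h'))
              omega
          have heq : h l n * h n (n + 1) = h l (n + 1) :=
            hyp l n hl1.1 hl1.2 (Nat.lt_succ_self n)
          rw [hlast2, hcard, ← heq]
          rw [show S.card + 1 + 2 = (S.card + 2) + 1 by omega, pow_succ]
          rw [smul_mul_assoc, sub_mul, one_mul]
          module
      _ = (∑ S ∈ (Finset.Ioo 1 n).powerset,
            (-1 : ℤ) ^ (S.card + 2) •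
              (1 - h ((1 :: S.sort (· ≤ ·)).getLast (by simp)) n)) * h n (n + 1) :=
          (Finset.sum_mul _ _ _).symm
      _ = (∑ S ∈ (Finset.Ioo 1 n).powerset,
            (-1 : ℤ) ^ (S.card + 2) •
              ((1 :: S.sort (· ≤ ·)).map fun t => 1 - h t (t + 1)).prod) * h n (n + 1) := by
          rw [IH h hyp']
      _ = ∑ S ∈ (Finset.Ioo 1 n).powerset,
            ((-1 : ℤ) ^ (S.card + 2) •
              ((1 :: S.sort (· ≤ ·)).map fun t => 1 - h t (t + 1)).prod) * h n (n + 1) :=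
          Finset.sum_mul _ _ _
      _ = ∑ S ∈ (Finset.Ioo 1 n).powerset,
          ((-1 : ℤ) ^ (S.card + 2) •
              ((1 :: S.sort (· ≤ ·)).map fun t => 1 - h t (t + 1)).prod
            + (-1 : ℤ) ^ ((insert n S).card + 2) •
              ((1 :: (insert n S).sort (· ≤ ·)).map fun t => 1 - h t (t + 1)).prod) := by
          refine Finset.sum_congr rfl fun S hS => ?_
          rw [Finset.mem_powerset] at hS
          have hSle : ∀ b ∈ S, b ≤ n := fun b hb => le_of_lt (Finset.mem_Ioo.1 (hS hb)).2
          have hSn : n ∉ S := fun hc => hnmem (hS hc)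
          have hsort : (insert n S).sort (· ≤ ·) = S.sort (· ≤ ·) ++ [n] :=
            sort_insert_max hSle hSn
          have hcard : (insert n S).card = S.card + 1 := Finset.card_insert_of_notMem hSn
          rw [hsort, hcard, show S.card + 1 + 2 = (S.card + 2) + 1 by omega, pow_succ]
          rw [show (1 : ℕ) :: (S.sort (· ≤ ·) ++ [n]) = (1 :: S.sort (· ≤ ·)) ++ [n] by simp]
          rw [List.map_append, List.prod_append]
          simp only [List.map_singleton, List.prod_singleton]
          rw [mul_sub, mul_one, smul_mul_assoc]
          module
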